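/- Let 2 ≤ k ≤ n−2. The linear map from the kinematic space K_{k,n} to ℝ^{N}, where N is the set of nonfrozen k-element subsets of {1,…,n}, sending s to the tuple (η_J(s))_{J ∈ N}, is a linear isomorphism. In particular the functionals η_J for nonfrozen J form a basis of the dual space of K_{k,n}, and dim K_{k,n} = binom(n,k) − n. -/

import Mathlib

open Finset


/-- The linear functional `L_j(x) = Σ_{r=1}^{n−1} r·x_{j+r}` (subscripts mod `n`). -/
def Lfun {n : ℕ} (j : Fin n) (x : Fin n → ℝ) : ℝ :=
  ∑ r : Fin n, (r.val : ℝ) * x (j + r)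

/-- `h(x) = min_{1 ≤ j ≤ n} L_j(x)`. -/
noncomputable def hfun {n : ℕ} (x : Fin n → ℝ) : ℝ :=
  sInf (Set.range fun j : Fin n => Lfun j x)

/-- `e_S = Σ_{j ∈ S} e_j`, the indicator vector of a subset `S ⊆ {1,…,n}`. -/
def ind {n : ℕ} (S : Finset (Fin n)) : Fin n → ℝ := fun i => if i ∈ S then 1 else 0

/-- `ρ_J(x) = h(x − e_J)`. -/
noncomputable def rho {n : ℕ} (J : Finset (Fin n)) (x : Fin n → ℝ) : ℝ :=
  hfun (x - ind J)

/-- A `k`-subset is frozen if it is a cyclic interval `{i, i+1, …, i+k−1} (mod n)`. -/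
def IsFrozenSub (n k : ℕ) (J : Finset (Fin n)) : Prop :=
  ∃ i : Fin n, J = univ.filter fun x => (x - i).val < k

instance (n k : ℕ) (J : Finset (Fin n)) : Decidable (IsFrozenSub n k J) :=
  inferInstanceAs (Decidable (∃ i : Fin n, J = univ.filter fun x => (x - i).val < k))

/-- Index type of coordinates of `ℝ^{binom(n,k)}`: the `k`-element subsets of `{1,…,n}`. -/
abbrev KIdx (n k : ℕ) := {J : Finset (Fin n) // J.card = k}

/-- The kinematic space `K_{k,n} = {s : ∀ a, Σ_{J ∋ a} s_J = 0} ⊆ ℝ^{binom(n,k)}`. -/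
def Kspace (n k : ℕ) : Submodule ℝ (KIdx n k → ℝ) where
  carrier := {s | ∀ a : Fin n, ∑ J ∈ univ.filter (fun J : KIdx n k => a ∈ J.1), s J = 0}
  add_mem' := by
    intro x y hx hy a
    simp only [Pi.add_apply, Finset.sum_add_distrib]
    rw [hx a, hy a, add_zero]
  zero_mem' := by
    intro a
    simp
  smul_mem' := by
    intro r x hx a
    simp only [Pi.smul_apply, smul_eq_mul, ← Finset.mul_sum]
    rw [hx a, mul_zero]

/-- The planar basis element `η_J(s) = −(1/n)·Σ_I s_I ρ_J(e_I)`. -/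
noncomputable def eta (n k : ℕ) (J : Finset (Fin n)) (s : KIdx n k → ℝ) : ℝ :=
  -(1 / (n : ℝ)) * ∑ I : KIdx n k, s I * rho J (ind I.1)


namespace Stmt7
open Fin.NatCast Fin.CommRing
variable {n : ℕ}

/-- number of elements of `S` with value `< m`, as an integer -/
def bcz (S : Finset (Fin n)) (m : ℕ) : ℤ := ((S.filter fun a => a.val < m).card : ℤ)

/-- `b_Y - b_X` at position `j` -/
def Dz (X Y : Finset (Fin n)) (j : Fin n) : ℤ := bcz Y j.val - bcz X j.val

/-- max over j of `Dz X Y j` -/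
def Mz [NeZero n] (X Y : Finset (Fin n)) : ℤ :=
  (Finset.univ.image (Dz X Y)).max' ((Finset.univ_nonempty).image _)

def lends [NeZero n] (I : Finset (Fin n)) : Finset (Fin n) := I.filter fun l => l - 1 ∉ I

def bump [NeZero n] (I ε : Finset (Fin n)) : Finset (Fin n) := (I \ ε) ∪ ε.image (· - 1)

lemma bcz_zero (S : Finset (Fin n)) : bcz S 0 = 0 := by simp [bcz]

lemma bcz_full (S : Finset (Fin n)) : bcz S n = S.card := by
  unfold bcz; norm_cast; congr 1; apply filter_true_of_mem; intro a _; exact a.isLt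

lemma bcz_succ (S : Finset (Fin n)) (j : Fin n) :
    bcz S (j.val + 1) = bcz S j.val + (if j ∈ S then 1 else 0) := by
  unfold bcz
  have h1 : (S.filter fun a => a.val < j.val + 1)
      = (S.filter fun a => a.val < j.val) ∪ (S.filter fun a => a = j) := by
    rw [← filter_or]
    apply filter_congr
    intro a _
    simp only [Nat.lt_succ_iff_lt_or_eq, Fin.val_eq_val]
  rw [h1, card_union_of_disjoint]
  · by_cases hj : j ∈ S <;> simp [filter_eq', hj]
  · rw [disjoint_left]
    intro a ha ha'
    simp only [mem_filter] at ha ha'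
    obtain ⟨_, h2⟩ := ha'
    subst h2
    omega
    

lemma Dz_le_Mz [NeZero n] (X Y : Finset (Fin n)) (j : Fin n) : Dz X Y j ≤ Mz X Y :=
  Finset.le_max' _ _ (mem_image_of_mem _ (mem_univ j))

lemma exists_Mz [NeZero n] (X Y : Finset (Fin n)) : ∃ j, Dz X Y j = Mz X Y := by
  have := Finset.max'_mem (Finset.univ.image (Dz X Y)) ((Finset.univ_nonempty).image _)
  rw [Finset.mem_image] at this
  obtain ⟨j, _, hj⟩ := this
  exact ⟨j, hj⟩

lemma Dz_zero [NeZero n] (X Y : Finset (Fin n)) : Dz X Y 0 = 0 := by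
  simp [Dz, Fin.val_zero, bcz_zero]

lemma Dz_self (X : Finset (Fin n)) (j : Fin n) : Dz X X j = 0 := by simp [Dz]

lemma Mz_self [NeZero n] (X : Finset (Fin n)) : Mz X X = 0 := by
  obtain ⟨j, hj⟩ := exists_Mz X X
  rw [← hj, Dz_self]

lemma Dz_succ [NeZero n] {X Y : Finset (Fin n)} (h : X.card = Y.card) (j : Fin n) :
    Dz X Y (j + 1) = Dz X Y j + (if j ∈ Y then 1 else 0) - (if j ∈ X then 1 else 0) := by
  obtain ⟨m, rfl⟩ : ∃ m, n = m + 1 :=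
    ⟨n - 1, (Nat.succ_pred_eq_of_pos (Nat.pos_of_ne_zero (NeZero.ne n))).symm⟩
  have eX := bcz_succ X j
  have eY := bcz_succ Y j
  by_cases hj : j = Fin.last m
  · have h0 : j + 1 = 0 := by
      apply Fin.ext
      rw [Fin.val_add_one, if_pos hj, Fin.val_zero]
    have hXn := bcz_full X
    have hYn := bcz_full Y
    have hjv : j.val + 1 = m + 1 := by rw [hj]; simp [Fin.last]
    rw [hjv] at eX eY
    rw [h0]
    simp only [Dz, Fin.val_zero, bcz_zero]
    rw [h] at hXn
    omega
  · have h0 : (j + 1).val = j.val + 1 := by rw [Fin.val_add_one, if_neg hj]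
    simp only [Dz, h0, eX, eY]
    ring


lemma run_exists [NeZero n] {I : Finset (Fin n)} (hne : I ≠ univ) {x : Fin n} (hx : x ∈ I) :
    ∃ (l : Fin n) (t : ℕ), l ∈ lends I ∧ x = l + (t : Fin n) ∧ ∀ s ≤ t, l + (s : Fin n) ∈ I := by
  obtain ⟨m, hm⟩ : ∃ m, m ∉ I := by
    by_contra hc; push_neg at hc; exact hne (eq_univ_iff_forall.2 hc)
  have hex : ∃ t : ℕ, x - ((t + 1 : ℕ) : Fin n) ∉ I := by
    refine ⟨(x - m).val - 1, ?_⟩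
    have hxm : x ≠ m := fun h => hm (h ▸ hx)
    have h1 : (x - m) ≠ 0 := sub_ne_zero_of_ne hxm
    have h2 : 1 ≤ (x - m).val := by
      rcases Nat.eq_zero_or_pos (x - m).val with h | h
      · exact absurd (Fin.ext h) h1
      · exact h
    have h3 : ((x - m).val - 1 + 1 : ℕ) = (x - m).val := by omega
    rw [h3, Fin.cast_val_eq_self]
    rw [sub_sub_cancel]
    exact hm
  set t0 := Nat.find hex with ht0
  have hP : x - ((t0 + 1 : ℕ) : Fin n) ∉ I := Nat.find_spec hex
  have hmin : ∀ s, s < t0 → x - ((s + 1 : ℕ) : Fin n) ∈ I := by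
    intro s hs
    have := Nat.find_min hex hs
    rwa [not_not] at this
  refine ⟨x - ((t0 : ℕ) : Fin n), t0, ?_, ?_, ?_⟩
  · unfold lends; rw [mem_filter]
    constructor
    · rcases Nat.eq_zero_or_pos t0 with h0 | h0
      · rw [h0]; simpa using hx
      · have h7 := hmin (t0 - 1) (by omega)
        have h8 : (t0 - 1 + 1) = t0 := by omega
        rw [h8] at h7; exact h7
    · have he : x - ((t0 : ℕ) : Fin n) - 1 = x - ((t0 + 1 : ℕ) : Fin n) := by
        push_cast; ring
      rw [he]; exact hP
  · rw [sub_add_cancel]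
  · intro s hs
    have he : x - ((t0 : ℕ) : Fin n) + ((s : ℕ) : Fin n) = x - (((t0 - s : ℕ)) : Fin n) := by
      have h4 : ((t0 : ℕ) : Fin n) = ((t0 - s : ℕ) : Fin n) + ((s : ℕ) : Fin n) := by
        rw [← Nat.cast_add]
        congr 1
        omega
      rw [h4]; ring
    rw [he]
    rcases Nat.eq_zero_or_pos (t0 - s) with h | h
    · rw [h]; simpa using hx
    · have h5 : (t0 - s - 1) < t0 := by omega
      have h7 := hmin _ h5
      have h6 : (t0 - s - 1 + 1) = t0 - s := by omega
      rwa [h6] at h7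

lemma argmax_step [NeZero n] {X I : Finset (Fin n)} (h : X.card = I.card) {j : Fin n}
    (hj : Dz X I j = Mz X I) (hjI : j ∈ I) : j ∈ X ∧ Dz X I (j + 1) = Mz X I := by
  have e := Dz_succ h j
  have hle := Dz_le_Mz X I (j + 1)
  rw [e, hj, if_pos hjI] at hle
  by_cases hjX : j ∈ X
  · refine ⟨hjX, ?_⟩
    rw [e, hj, if_pos hjI, if_pos hjX]; ring
  · rw [if_neg hjX] at hle; omega

lemma chain [NeZero n] {X I : Finset (Fin n)} (h : X.card = I.card) {l : Fin n}
    (hl : Dz X I l = Mz X I) :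
    ∀ t : ℕ, (∀ s ≤ t, l + (s : Fin n) ∈ I) →
      (∀ s ≤ t, l + (s : Fin n) ∈ X) ∧ Dz X I (l + ((t + 1 : ℕ) : Fin n)) = Mz X I := by
  intro t
  induction t with
  | zero =>
    intro hs
    have h0 : l ∈ I := by simpa using hs 0 le_rfl
    obtain ⟨h1, h2⟩ := argmax_step h (by simpa using hl) h0
    constructor
    · intro s hs'
      interval_cases s
      simpa using h1
    · have : ((0 + 1 : ℕ) : Fin n) = 1 := by push_cast; ring
      rw [this]
      exact h2
  | succ t ih =>
    intro hs
    obtain ⟨hX, hD⟩ := ih (fun s hs' => hs s (le_trans hs' (Nat.le_succ t)))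
    obtain ⟨h1, h2⟩ := argmax_step h hD (hs (t + 1) le_rfl)
    constructor
    · intro s hs'
      rcases Nat.lt_succ_iff_lt_or_eq.1 (Nat.lt_succ_of_le hs') with h' | h'
      · exact hX s (Nat.lt_succ_iff.1 h')
      · rw [h']; exact h1
    · have he : l + ((t + 1 + 1 : ℕ) : Fin n) = l + ((t + 1 : ℕ) : Fin n) + 1 := by
        push_cast; ring
      rw [he]
      exact h2

lemma subset_of_argmax [NeZero n] {X I : Finset (Fin n)} (h : X.card = I.card)
    (hne : I ≠ univ) (hall : ∀ l ∈ lends I, Dz X I l = Mz X I) : I ⊆ X := by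
  intro x hx
  obtain ⟨l, t, hlL, hxe, hrun⟩ := run_exists hne hx
  have := (chain h (hall l hlL) t hrun).1 t le_rfl
  rwa [← hxe] at this


lemma mem_lends [NeZero n] {I : Finset (Fin n)} {l : Fin n} :
    l ∈ lends I ↔ l ∈ I ∧ l - 1 ∉ I := mem_filter

lemma sub_one_inj [NeZero n] : Function.Injective (fun x : Fin n => x - 1) := by
  intro a b h
  simp only at h
  have h2 := congrArg (· + 1) h
  simp only [sub_add_cancel] at h2
  exact h2

lemma bump_disj [NeZero n] {I ε : Finset (Fin n)} (hε : ε ⊆ lends I) :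
    Disjoint (I \ ε) (ε.image (· - 1)) := by
  rw [disjoint_right]
  intro y hy hy'
  obtain ⟨l, hl, rfl⟩ := mem_image.1 hy
  exact (mem_lends.1 (hε hl)).2 (mem_sdiff.1 hy').1

lemma bump_card [NeZero n] {I ε : Finset (Fin n)} (hε : ε ⊆ lends I) :
    (bump I ε).card = I.card := by
  have hεI : ε ⊆ I := hε.trans (filter_subset _ _)
  unfold bump
  rw [card_union_of_disjoint (bump_disj hε), card_image_of_injective _ sub_one_inj,
    card_sdiff_of_subset hεI]
  have := card_le_card hεI
  omega

lemma indicator_pointwise [NeZero n] (l j : Fin n) :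
    ((if (l - 1).val < j.val then 1 else 0) : ℤ) - (if l.val < j.val then 1 else 0)
      = (if l = j then 1 else 0) - (if l = 0 then 1 else 0) := by
  obtain ⟨m, rfl⟩ : ∃ m, n = m + 1 :=
    ⟨n - 1, (Nat.succ_pred_eq_of_pos (Nat.pos_of_ne_zero (NeZero.ne n))).symm⟩
  have hjn : j.val < m + 1 := j.isLt
  have hln : l.val < m + 1 := l.isLt
  have hlv : (l - 1).val = if l = 0 then m else l.val - 1 := Fin.coe_sub_one l
  by_cases h0 : l = 0
  · rw [hlv, if_pos h0, if_pos h0]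
    have h0v : l.val = 0 := by rw [h0]; rfl
    have : (l = j) ↔ (j.val = 0) := by
      constructor
      · intro h; rw [← h, h0v]
      · intro h; apply Fin.ext; rw [h0v, h]
    by_cases hj0 : j.val = 0
    · rw [if_pos (this.2 hj0)]
      split_ifs <;> omega
    · rw [if_neg (fun hc => hj0 (this.1 hc))]
      split_ifs <;> omega
  · rw [hlv, if_neg h0]
    have h1 : 1 ≤ l.val := by
      rcases Nat.eq_zero_or_pos l.val with h | h
      · exact absurd (Fin.ext h) h0
      · exact h
    by_cases hlj' : l = j
    · rw [if_pos hlj', if_neg h0]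
      have : l.val = j.val := by rw [hlj']
      split_ifs <;> omega
    · rw [if_neg hlj', if_neg h0]
      have : l.val ≠ j.val := fun hc => hlj' (Fin.ext hc)
      split_ifs <;> omega

lemma bcz_bump [NeZero n] {I ε : Finset (Fin n)} (hε : ε ⊆ lends I) (j : Fin n) :
    bcz (bump I ε) j.val = bcz I j.val + (if j ∈ ε then 1 else 0)
      - (if (0 : Fin n) ∈ ε then 1 else 0) := by
  have hεI : ε ⊆ I := hε.trans (filter_subset _ _)
  unfold bcz bump
  rw [filter_union, card_union_of_disjoint]
  swap
  · exact disjoint_filter_filter (bump_disj hε)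
  have e1 : ((I \ ε).filter fun a => a.val < j.val)
      = (I.filter fun a => a.val < j.val) \ (ε.filter fun a => a.val < j.val) := by
    ext a; simp only [mem_filter, mem_sdiff]; tauto
  have e2 : ((ε.image (· - 1)).filter fun a => a.val < j.val)
      = (ε.filter fun l => (l - 1).val < j.val).image (· - 1) := by
    rw [Finset.filter_image]
  rw [e1, e2, card_sdiff_of_subset (filter_subset_filter _ hεI),
    card_image_of_injective _ sub_one_inj]
  have hle : (ε.filter fun a => a.val < j.val).card ≤ (I.filter fun a => a.val < j.val).card :=
    card_le_card (filter_subset_filter _ hεI)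
  have key : ((ε.filter fun l => (l - 1).val < j.val).card : ℤ)
      - (ε.filter fun a => a.val < j.val).card
      = (if j ∈ ε then 1 else 0) - (if (0 : Fin n) ∈ ε then 1 else 0) := by
    rw [card_filter, card_filter]
    push_cast
    rw [← Finset.sum_sub_distrib]
    have : ∀ l ∈ ε, ((if (l - 1).val < j.val then (1:ℤ) else 0) - if l.val < j.val then 1 else 0)
        = (if l = j then 1 else 0) - (if l = 0 then 1 else 0) := fun l _ => indicator_pointwise l j
    rw [Finset.sum_congr rfl this, Finset.sum_sub_distrib]
    congr 1
    · rw [Finset.sum_ite_eq' ε j (fun _ => (1:ℤ))]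
    · rw [Finset.sum_ite_eq' ε 0 (fun _ => (1:ℤ))]
  push_cast [hle] at key ⊢
  linarith [key]

lemma Dz_bump [NeZero n] {I ε : Finset (Fin n)} (hε : ε ⊆ lends I) (X : Finset (Fin n))
    (j : Fin n) :
    Dz X (bump I ε) j = Dz X I j + (if j ∈ ε then 1 else 0)
      - (if (0 : Fin n) ∈ ε then 1 else 0) := by
  unfold Dz
  rw [bcz_bump hε]
  ring

lemma Mz_bump [NeZero n] {I ε : Finset (Fin n)} (hε : ε ⊆ lends I) (X : Finset (Fin n)) :
    Mz X (bump I ε) = Mz X I + (if ∃ j ∈ ε, Dz X I j = Mz X I then 1 else 0)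
      - (if (0 : Fin n) ∈ ε then 1 else 0) := by
  apply le_antisymm
  · apply Finset.max'_le
    intro y hy
    obtain ⟨j, _, rfl⟩ := mem_image.1 hy
    rw [Dz_bump hε]
    have hD := Dz_le_Mz X I j
    have key : Dz X I j + (if j ∈ ε then 1 else 0)
        ≤ Mz X I + (if ∃ j' ∈ ε, Dz X I j' = Mz X I then 1 else 0) := by
      by_cases hj : j ∈ ε
      · by_cases hDj : Dz X I j = Mz X I
        · rw [if_pos hj, if_pos ⟨j, hj, hDj⟩]
          omega
        · have hlt : Dz X I j < Mz X I := lt_of_le_of_ne hD hDj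
          split_ifs <;> omega
      · rw [if_neg hj]
        split_ifs <;> omega
    linarith [key]
  · by_cases hhit : ∃ j ∈ ε, Dz X I j = Mz X I
    · obtain ⟨j, hjε, hjD⟩ := hhit
      have hb := Dz_le_Mz X (bump I ε) j
      rw [Dz_bump hε, hjD, if_pos hjε] at hb
      rw [if_pos ⟨j, hjε, hjD⟩]
      linarith
    · obtain ⟨j0, hj0⟩ := exists_Mz X I
      have hb := Dz_le_Mz X (bump I ε) j0
      have hj0ε : j0 ∉ ε := fun hc => hhit ⟨j0, hc, hj0⟩
      rw [Dz_bump hε, hj0, if_neg hj0ε] at hb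
      rw [if_neg hhit]
      linarith


lemma alt_exists {α : Type*} [DecidableEq α] {L : Finset α} (hL : L.Nonempty)
    (p : α → Prop) [DecidablePred p] :
    ∑ ε ∈ L.powerset, (-1 : ℤ) ^ ε.card * (if ∃ j ∈ ε, p j then 1 else 0)
      = -(if ∀ l ∈ L, p l then 1 else 0) := by
  have h1 : ∀ ε ∈ L.powerset, (-1 : ℤ) ^ ε.card * (if ∃ j ∈ ε, p j then 1 else 0)
      = (-1 : ℤ) ^ ε.card - (if ∀ j ∈ ε, ¬ p j then ((-1 : ℤ) ^ ε.card) else 0) := by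
    intro ε _
    by_cases h : ∃ j ∈ ε, p j
    · rw [if_pos h, if_neg (by push_neg; exact h), mul_one, sub_zero]
    · push_neg at h
      rw [if_neg (by push_neg; exact h), if_pos h, mul_zero, sub_self]
  rw [Finset.sum_congr rfl h1, Finset.sum_sub_distrib,
    Finset.sum_powerset_neg_one_pow_card_of_nonempty hL, ← Finset.sum_filter]
  have h2 : (L.powerset.filter fun ε => ∀ j ∈ ε, ¬ p j)
      = (L.filter fun l => ¬ p l).powerset := by
    ext ε
    simp only [Finset.mem_filter, Finset.mem_powerset]
    constructor
    · rintro ⟨hsub, hall⟩ x hx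
      exact Finset.mem_filter.2 ⟨hsub hx, hall x hx⟩
    · intro h
      refine ⟨fun x hx => (Finset.mem_filter.1 (h hx)).1,
        fun x hx => (Finset.mem_filter.1 (h hx)).2⟩
  rw [h2, Finset.sum_powerset_neg_one_pow_card]
  have h3 : ((L.filter fun l => ¬ p l) = ∅) ↔ (∀ l ∈ L, p l) := by
    rw [Finset.filter_eq_empty_iff]
    push_neg
    rfl
  rw [if_congr h3 rfl rfl]
  ring

lemma alt_mem {α : Type*} [DecidableEq α] {L : Finset α} (hL : L.Nonempty) (a : α) :
    ∑ ε ∈ L.powerset, (-1 : ℤ) ^ ε.card * (if a ∈ ε then 1 else 0)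
      = -(if L = {a} then 1 else 0) := by
  have h1 : ∀ ε ∈ L.powerset, (-1 : ℤ) ^ ε.card * (if a ∈ ε then 1 else 0)
      = (-1 : ℤ) ^ ε.card * (if ∃ j ∈ ε, j = a then 1 else 0) := by
    intro ε _
    congr 1
    apply if_congr _ rfl rfl
    constructor
    · intro h; exact ⟨a, h, rfl⟩
    · rintro ⟨j, hj, rfl⟩; exact hj
  rw [Finset.sum_congr rfl h1, alt_exists hL (· = a)]
  congr 1
  apply if_congr _ rfl rfl
  rw [Finset.eq_singleton_iff_nonempty_unique_mem]
  exact ⟨fun h => ⟨hL, h⟩, fun h => h.2⟩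

lemma key_identity [NeZero n] {I : Finset (Fin n)} (hL : (lends I).Nonempty)
    (X : Finset (Fin n)) :
    ∑ ε ∈ (lends I).powerset, (-1 : ℤ) ^ ε.card * Mz X (bump I ε)
    = -(if ∀ l ∈ lends I, Dz X I l = Mz X I then 1 else 0)
      + (if lends I = {0} then 1 else 0) := by
  have h1 : ∀ ε ∈ (lends I).powerset, (-1 : ℤ) ^ ε.card * Mz X (bump I ε)
      = (-1 : ℤ) ^ ε.card * Mz X I
        + (-1 : ℤ) ^ ε.card * (if ∃ j ∈ ε, Dz X I j = Mz X I then 1 else 0)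
        - (-1 : ℤ) ^ ε.card * (if (0 : Fin n) ∈ ε then 1 else 0) := by
    intro ε hε
    rw [Mz_bump (Finset.mem_powerset.1 hε) X]
    ring
  rw [Finset.sum_congr rfl h1, Finset.sum_sub_distrib, Finset.sum_add_distrib,
    ← Finset.sum_mul, Finset.sum_powerset_neg_one_pow_card_of_nonempty hL, zero_mul]
  rw [show (∑ ε ∈ (lends I).powerset, (-1 : ℤ) ^ ε.card * (if ∃ j ∈ ε, Dz X I j = Mz X I then 1 else 0))
      = -(if ∀ l ∈ lends I, Dz X I l = Mz X I then 1 else 0) from by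
    convert alt_exists hL (fun j => Dz X I j = Mz X I)]
  rw [alt_mem hL 0]
  ring


lemma sub_val_int [NeZero n] (a j : Fin n) :
    ((a - j).val : ℤ) = (a.val : ℤ) - j.val + n * (if a.val < j.val then 1 else 0) := by
  have hj := j.isLt
  have ha := a.isLt
  have h : (a - j).val = (n - j.val + a.val) % n := by rw [Fin.sub_def]
  by_cases hc : a.val < j.val
  · rw [if_pos hc]
    have hlt : n - j.val + a.val < n := by omega
    rw [Nat.mod_eq_of_lt hlt] at h
    omega
  · rw [if_neg hc]
    have h2 : (n - j.val + a.val) % n = a.val - j.val := by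
      rw [show n - j.val + a.val = (a.val - j.val) + 1 * n by omega,
        Nat.add_mul_mod_self_right]
      exact Nat.mod_eq_of_lt (by omega)
    rw [h2] at h
    omega

lemma sum_sub_val [NeZero n] (S : Finset (Fin n)) (j : Fin n) :
    ∑ a ∈ S, ((a - j).val : ℤ)
      = (∑ a ∈ S, (a.val : ℤ)) - S.card * j.val + n * bcz S j.val := by
  rw [Finset.sum_congr rfl (fun a _ => sub_val_int a j), Finset.sum_add_distrib,
    Finset.sum_sub_distrib]
  congr 1
  · congr 1
    rw [Finset.sum_const]
    push_cast
    ring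
  · rw [← Finset.mul_sum]
    congr 1
    unfold bcz
    rw [Finset.card_filter]
    push_cast
    rfl

lemma Lfun_reindex [NeZero n] (j : Fin n) (x : Fin n → ℝ) :
    Lfun j x = ∑ a : Fin n, ((a - j).val : ℝ) * x a := by
  unfold Lfun
  apply Fintype.sum_equiv (Equiv.addLeft j)
  intro r
  simp [add_sub_cancel_left]

lemma Lfun_ind [NeZero n] (I J : Finset (Fin n)) (j : Fin n) :
    Lfun j (ind I - ind J)
      = (((∑ a ∈ I, (a.val : ℤ)) - (∑ a ∈ J, (a.val : ℤ))
          - ((I.card : ℤ) - J.card) * j.val - n * Dz I J j : ℤ) : ℝ) := by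
  rw [Lfun_reindex]
  have e1 : ∀ a : Fin n, ((a - j).val : ℝ) * (ind I - ind J) a
      = (if a ∈ I then ((a - j).val : ℝ) else 0) - (if a ∈ J then ((a - j).val : ℝ) else 0) := by
    intro a
    simp only [Pi.sub_apply, ind]
    split_ifs <;> ring
  rw [Finset.sum_congr rfl (fun a _ => e1 a), Finset.sum_sub_distrib]
  rw [Finset.sum_ite_mem, Finset.sum_ite_mem, Finset.univ_inter, Finset.univ_inter]
  have e2 : ∀ S : Finset (Fin n), ∑ a ∈ S, ((a - j).val : ℝ)
      = ((∑ a ∈ S, ((a - j).val : ℤ) : ℤ) : ℝ) := by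
    intro S; push_cast; rfl
  rw [e2 I, e2 J, sum_sub_val, sum_sub_val]
  unfold Dz
  push_cast
  ring

lemma hfun_ind [NeZero n] {I J : Finset (Fin n)} (h : I.card = J.card) :
    hfun (ind I - ind J)
      = (((∑ a ∈ I, (a.val : ℤ)) - (∑ a ∈ J, (a.val : ℤ)) - n * Mz I J : ℤ) : ℝ) := by
  have hne : Nonempty (Fin n) := ⟨0⟩
  unfold hfun
  apply le_antisymm
  · obtain ⟨j0, hj0⟩ := exists_Mz I J
    apply csInf_le (Set.Finite.bddBelow (Set.finite_range _))
    refine ⟨j0, ?_⟩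
    show Lfun j0 (ind I - ind J) = _
    rw [Lfun_ind, h, ← hj0]
    push_cast
    ring
  · apply le_csInf (Set.range_nonempty _)
    rintro y ⟨j, rfl⟩
    show _ ≤ Lfun j (ind I - ind J)
    rw [Lfun_ind, h]
    have hD := Dz_le_Mz I J j
    have hDr : ((Dz I J j : ℤ) : ℝ) ≤ ((Mz I J : ℤ) : ℝ) := by exact_mod_cast hD
    have hn : (0:ℝ) ≤ n := Nat.cast_nonneg n
    push_cast
    nlinarith [mul_le_mul_of_nonneg_left hDr hn]

lemma ksum_weight {k : ℕ} {s : KIdx n k → ℝ} (hs : s ∈ Kspace n k) (c : Fin n → ℝ) :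
    ∑ I : KIdx n k, (∑ a ∈ I.1, c a) * s I = 0 := by
  have h : ∀ a : Fin n, ∑ J ∈ univ.filter (fun J : KIdx n k => a ∈ J.1), s J = 0 := hs
  have e1 : ∀ I : KIdx n k, (∑ a ∈ I.1, c a) * s I
      = ∑ a : Fin n, (if a ∈ I.1 then c a * s I else 0) := by
    intro I
    rw [Finset.sum_ite_mem, Finset.univ_inter, Finset.sum_mul]
  rw [Finset.sum_congr rfl (fun I _ => e1 I), Finset.sum_comm]
  apply Finset.sum_eq_zero
  intro a _
  have e2 : ∑ I : KIdx n k, (if a ∈ I.1 then c a * s I else 0)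
      = c a * ∑ I ∈ univ.filter (fun I : KIdx n k => a ∈ I.1), s I := by
    rw [Finset.mul_sum, Finset.sum_filter]
  rw [e2, h a, mul_zero]

lemma ksum_one {k : ℕ} (hk : k ≠ 0) {s : KIdx n k → ℝ} (hs : s ∈ Kspace n k) :
    ∑ I : KIdx n k, s I = 0 := by
  have h := ksum_weight hs (fun _ => (1 : ℝ))
  have e : ∀ I : KIdx n k, (∑ _a ∈ I.1, (1:ℝ)) * s I = k * s I := by
    intro I
    rw [Finset.sum_const, I.2]
    simp
  rw [Finset.sum_congr rfl (fun I _ => e I), ← Finset.mul_sum] at h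
  have hk' : (k : ℝ) ≠ 0 := Nat.cast_ne_zero.2 hk
  exact (mul_eq_zero.1 h).resolve_left hk'

lemma eta_formula [NeZero n] {k : ℕ} (hk : k ≠ 0) {s : KIdx n k → ℝ}
    (hs : s ∈ Kspace n k) {J : Finset (Fin n)} (hJ : J.card = k) :
    eta n k J s = ∑ I : KIdx n k, (Mz I.1 J : ℝ) * s I := by
  have hn : (n : ℝ) ≠ 0 := Nat.cast_ne_zero.2 (NeZero.ne n)
  unfold eta rho
  have e1 : ∀ I : KIdx n k, s I * hfun (ind I.1 - ind J)
      = (∑ a ∈ I.1, (a.val : ℝ)) * s I - (∑ a ∈ J, (a.val : ℤ)) * s I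
        - n * ((Mz I.1 J : ℝ) * s I) := by
    intro I
    rw [hfun_ind (by rw [I.2, hJ])]
    push_cast
    ring
  rw [Finset.sum_congr rfl (fun I _ => e1 I), Finset.sum_sub_distrib, Finset.sum_sub_distrib]
  rw [ksum_weight hs (fun a => (a.val : ℝ)), ← Finset.mul_sum, ← Finset.mul_sum,
    ksum_one hk hs, mul_zero]
  field_simp
  ring


lemma mono_chain {T : ℕ} {D : ℕ → ℤ} (h : ∀ t, t < T → D t ≤ D (t + 1)) :
    ∀ t, t ≤ T → D t ≤ D T := by
  induction T with
  | zero => intro t ht; rw [Nat.le_zero.1 ht]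
  | succ T ih =>
    intro t ht
    rcases eq_or_lt_of_le ht with h' | h'
    · rw [h']
    · exact le_trans (ih (fun u hu => h u (Nat.lt_succ_of_lt hu)) t (Nat.lt_succ_iff.1 h'))
        (h T (Nat.lt_succ_self T))

lemma anti_chain {T : ℕ} {D : ℕ → ℤ} (h : ∀ t, t < T → D (t + 1) ≤ D t) :
    ∀ t, t ≤ T → D t ≤ D 0 := by
  intro t
  induction t with
  | zero => intro _; rfl
  | succ t ih =>
    intro ht
    exact le_trans (h t ht) (ih (le_of_lt ht))

lemma mem_Ji {k : ℕ} (i x : Fin n) :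
    x ∈ (univ.filter fun y : Fin n => (y - i).val < k) ↔ (x - i).val < k := by
  simp

lemma Ji_card [NeZero n] {k : ℕ} (hkn : k ≤ n) (i : Fin n) :
    (univ.filter fun y : Fin n => (y - i).val < k).card = k := by
  have hb : (univ.filter fun y : Fin n => (y - i).val < k).card = (Finset.range k).card := by
    apply Finset.card_bij (fun x _ => (x - i).val)
    · intro a ha
      rw [Finset.mem_range]
      exact (mem_Ji i a).1 ha
    · intro a ha b hb hab
      have h1 : a - i = b - i := Fin.ext hab
      have h2 := congrArg (· + i) h1
      simpa [sub_add_cancel] using h2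
    · intro b hb
      rw [Finset.mem_range] at hb
      refine ⟨i + (b : Fin n), ?_, ?_⟩
      · rw [mem_Ji, add_sub_cancel_left, Fin.val_natCast,
          Nat.mod_eq_of_lt (lt_of_lt_of_le hb hkn)]
        exact hb
      · rw [add_sub_cancel_left, Fin.val_natCast]
        exact Nat.mod_eq_of_lt (lt_of_lt_of_le hb hkn)
  rw [hb, Finset.card_range]

lemma frozen_Mz [NeZero n] {k : ℕ} (hkn : k ≤ n) (i : Fin n) {X : Finset (Fin n)}
    (hX : X.card = k) :
    Mz X (univ.filter fun y : Fin n => (y - i).val < k)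
      = Dz X (univ.filter fun y : Fin n => (y - i).val < k) (i + (k : Fin n)) := by
  set Ji := univ.filter fun y : Fin n => (y - i).val < k with hJi
  have hcard : X.card = Ji.card := by rw [hX, Ji_card hkn]
  set jm := i + (k : Fin n) with hjm
  apply le_antisymm
  · apply Finset.max'_le
    intro y hy
    obtain ⟨j, _, rfl⟩ := mem_image.1 hy
    -- cover: j = i + t (t ≤ k) or j = jm + t (t ≤ n - k)
    have hcast : ∀ (b : Fin n) (t : ℕ), t < n → (b + (t : Fin n) - b) = (t : Fin n) := by
      intro b t _; rw [add_sub_cancel_left]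
    have hup : ∀ t, t ≤ k → Dz X Ji (i + (t : Fin n)) ≤ Dz X Ji jm := by
      have := mono_chain (T := k) (D := fun t => Dz X Ji (i + (t : Fin n))) ?_
      · exact this
      · intro t ht
        have hmem : i + (t : Fin n) ∈ Ji := by
          rw [hJi, mem_Ji, add_sub_cancel_left, Fin.val_natCast,
            Nat.mod_eq_of_lt (lt_of_lt_of_le ht hkn)]
          exact ht
        have e := Dz_succ hcard (i + (t : Fin n))
        rw [if_pos hmem] at e
        show Dz X Ji (i + ((t : ℕ) : Fin n)) ≤ Dz X Ji (i + (((t + 1 : ℕ)) : Fin n))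
        have hc : (((t + 1 : ℕ)) : Fin n) = ((t : ℕ) : Fin n) + 1 := by push_cast; ring
        rw [hc, ← add_assoc, e]
        split_ifs <;> omega
    have hdown : ∀ t, t ≤ n - k → Dz X Ji (jm + (t : Fin n)) ≤ Dz X Ji jm := by
      have := anti_chain (T := n - k) (D := fun t => Dz X Ji (jm + (t : Fin n))) ?_
      · intro t ht
        have h0 := this t ht
        simpa using h0
      · intro t ht
        have hnmem : jm + (t : Fin n) ∉ Ji := by
          rw [hJi, mem_Ji]
          have : jm + (t : Fin n) - i = ((k + t : ℕ) : Fin n) := by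
            rw [hjm]; push_cast; ring
          rw [this, Fin.val_natCast, Nat.mod_eq_of_lt (by omega)]
          omega
        have e := Dz_succ hcard (jm + (t : Fin n))
        rw [if_neg hnmem] at e
        show Dz X Ji (jm + (((t + 1 : ℕ)) : Fin n)) ≤ Dz X Ji (jm + ((t : ℕ) : Fin n))
        have hc : (((t + 1 : ℕ)) : Fin n) = ((t : ℕ) : Fin n) + 1 := by push_cast; ring
        rw [hc, ← add_assoc, e]
        split_ifs <;> omega
    -- decide which side j is on
    set d := (j - i).val with hd
    have hj : j = i + (d : Fin n) := by
      rw [hd, Fin.cast_val_eq_self]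
      rw [add_sub_cancel]
    by_cases hdk : d ≤ k
    · rw [hj]; exact hup d hdk
    · have hdn : d < n := (j - i).isLt
      have hj2 : j = jm + ((d - k : ℕ) : Fin n) := by
        rw [hj, hjm, add_assoc, ← Nat.cast_add, show k + (d - k) = d by omega]
      rw [hj2]
      exact hdown (d - k) (by omega)
  · exact Dz_le_Mz _ _ _

lemma frozen_pair [NeZero n] {k : ℕ} (hk : k ≠ 0) (hkn : k ≤ n) {s : KIdx n k → ℝ}
    (hs : s ∈ Kspace n k) (i : Fin n) :
    ∑ I : KIdx n k, (Mz I.1 (univ.filter fun y : Fin n => (y - i).val < k) : ℝ) * s I = 0 := by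
  set Ji := univ.filter fun y : Fin n => (y - i).val < k with hJi
  set m := (i + (k : Fin n)).val with hm
  have e : ∀ I : KIdx n k, (Mz I.1 Ji : ℝ) * s I
      = (bcz Ji m : ℝ) * s I - (∑ a ∈ I.1, (if a.val < m then (1:ℝ) else 0)) * s I := by
    intro I
    rw [frozen_Mz hkn i I.2]
    unfold Dz
    have : (∑ a ∈ I.1, (if a.val < m then (1:ℝ) else 0)) = ((bcz I.1 m : ℤ) : ℝ) := by
      unfold bcz
      rw [Finset.card_filter]
      push_cast
      rfl
    rw [this]
    push_cast
    ring
  rw [Finset.sum_congr rfl (fun I _ => e I), Finset.sum_sub_distrib,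
    ← Finset.mul_sum, ksum_one hk hs, mul_zero,
    ksum_weight hs (fun a => if a.val < m then (1:ℝ) else 0)]
  ring

lemma main_inj [NeZero n] {k : ℕ} (hk2 : 2 ≤ k) (hkn : k ≤ n - 2) {s : KIdx n k → ℝ}
    (hs : s ∈ Kspace n k)
    (hz : ∀ J : KIdx n k, ¬IsFrozenSub n k J.1
      → ∑ I : KIdx n k, (Mz I.1 J.1 : ℝ) * s I = 0) :
    s = 0 := by
  have hn4 : 4 ≤ n := by
    rcases Nat.lt_or_ge n 4 with h | h
    · interval_cases n <;> omega
    · exact h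
  have hkn' : k ≤ n := by omega
  have HM : ∀ J : KIdx n k, ∑ I : KIdx n k, (Mz I.1 J.1 : ℝ) * s I = 0 := by
    intro J
    by_cases hf : IsFrozenSub n k J.1
    · obtain ⟨i, hi⟩ := hf
      rw [show J.1 = univ.filter fun y : Fin n => (y - i).val < k from hi]
      exact frozen_pair (by omega) hkn' hs i
    · exact hz J hf
  funext I
  have hIne : I.1 ≠ univ := by
    intro hc
    have := I.2
    rw [hc, Finset.card_univ, Fintype.card_fin] at this
    omega
  have hLne : (lends I.1).Nonempty := by
    have hpos : 0 < I.1.card := by rw [I.2]; omega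
    obtain ⟨x, hx⟩ := Finset.card_pos.1 hpos
    obtain ⟨l, t, hl, _, _⟩ := run_exists hIne hx
    exact ⟨l, hl⟩
  -- the alternating sum over bumps
  have Hu : ∑ I' : KIdx n k,
      (if ∀ l ∈ lends I.1, Dz I'.1 I.1 l = Mz I'.1 I.1 then (1:ℝ) else 0) * s I' = 0 := by
    have hzero : ∑ ε ∈ (lends I.1).powerset, ∑ I' : KIdx n k,
        ((-1 : ℝ) ^ ε.card * (Mz I'.1 (bump I.1 ε) : ℝ)) * s I' = 0 := by
      apply Finset.sum_eq_zero
      intro ε hε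
      have hcard : (bump I.1 ε).card = k := by
        rw [bump_card (Finset.mem_powerset.1 hε), I.2]
      have h0 := HM ⟨bump I.1 ε, hcard⟩
      simp only [mul_assoc]
      rw [← Finset.mul_sum]
      rw [show (∑ I' : KIdx n k, (Mz I'.1 (bump I.1 ε) : ℝ) * s I')
        = ∑ I' : KIdx n k, (Mz I'.1 ((⟨bump I.1 ε, hcard⟩ : KIdx n k)).1 : ℝ) * s I' from rfl]
      rw [h0, mul_zero]
    rw [Finset.sum_comm] at hzero
    have hinner : ∀ I' : KIdx n k, ∑ ε ∈ (lends I.1).powerset,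
        ((-1 : ℝ) ^ ε.card * (Mz I'.1 (bump I.1 ε) : ℝ)) * s I'
        = -((if ∀ l ∈ lends I.1, Dz I'.1 I.1 l = Mz I'.1 I.1 then (1:ℝ) else 0) * s I')
            + (if lends I.1 = {0} then (1:ℝ) else 0) * s I' := by
      intro I'
      rw [← Finset.sum_mul]
      have hcast : ∑ ε ∈ (lends I.1).powerset, (-1:ℝ)^ε.card * (Mz I'.1 (bump I.1 ε) : ℝ)
          = ((∑ ε ∈ (lends I.1).powerset, (-1:ℤ)^ε.card * Mz I'.1 (bump I.1 ε) : ℤ) : ℝ) := by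
        push_cast; rfl
      rw [hcast, key_identity hLne I'.1]
      push_cast
      split_ifs <;> ring
    rw [Finset.sum_congr rfl (fun I' _ => hinner I'), Finset.sum_add_distrib,
      ← Finset.mul_sum, ksum_one (by omega : k ≠ 0) hs, mul_zero, add_zero] at hzero
    rw [Finset.sum_neg_distrib, neg_eq_zero] at hzero
    exact hzero
  have hdiag : ∀ I' : KIdx n k,
      (if ∀ l ∈ lends I.1, Dz I'.1 I.1 l = Mz I'.1 I.1 then (1:ℝ) else 0) * s I'
        = (if I' = I then s I' else 0) := by
    intro I'
    by_cases hc : ∀ l ∈ lends I.1, Dz I'.1 I.1 l = Mz I'.1 I.1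
    · have hsub : I.1 ⊆ I'.1 := subset_of_argmax (by rw [I'.2, I.2]) hIne hc
      have heq : I' = I :=
        Subtype.ext (Finset.eq_of_subset_of_card_le hsub (by rw [I'.2, I.2])).symm
      rw [if_pos hc, if_pos heq, one_mul]
    · have hne2 : I' ≠ I := by
        intro hcx
        apply hc
        intro l hl
        rw [hcx, Dz_self, Mz_self]
      rw [if_neg hc, if_neg hne2, zero_mul]
  rw [Finset.sum_congr rfl (fun I' _ => hdiag I'), Finset.sum_ite_eq' univ I s] at Hu
  rw [if_pos (mem_univ I)] at Hu
  exact Hu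


/-- the constraint map -/
def Cmap (n k : ℕ) : (KIdx n k → ℝ) →ₗ[ℝ] (Fin n → ℝ) where
  toFun s := fun a => ∑ I : KIdx n k, (if a ∈ I.1 then s I else 0)
  map_add' x y := by
    funext a
    rw [Pi.add_apply, ← Finset.sum_add_distrib]
    apply Finset.sum_congr rfl
    intro I _
    rw [Pi.add_apply]
    split_ifs <;> ring
  map_smul' c x := by
    funext a
    show (∑ I : KIdx n k, if a ∈ I.1 then (c • x) I else 0)
      = ((RingHom.id ℝ) c • fun a => ∑ I : KIdx n k, if a ∈ I.1 then x I else 0) a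
    rw [RingHom.id_apply, Pi.smul_apply, smul_eq_mul, Finset.mul_sum]
    apply Finset.sum_congr rfl
    intro I _
    rw [Pi.smul_apply, smul_eq_mul]
    split_ifs <;> ring

lemma Kspace_eq_ker (n k : ℕ) : Kspace n k = LinearMap.ker (Cmap n k) := by
  ext s
  have h1 : s ∈ Kspace n k
      ↔ ∀ a : Fin n, ∑ J ∈ univ.filter (fun J : KIdx n k => a ∈ J.1), s J = 0 := Iff.rfl
  rw [h1, LinearMap.mem_ker]
  constructor
  · intro h
    funext a
    show ∑ I : KIdx n k, (if a ∈ I.1 then s I else 0) = 0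
    rw [← Finset.sum_filter]
    exact h a
  · intro h a
    have := congrFun h a
    rw [Finset.sum_filter]
    exact this

lemma card_kidx_supset {k : ℕ} (hkn : k ≤ n) {T : Finset (Fin n)} (hT : T.card ≤ k) :
    (univ.filter fun I : KIdx n k => T ⊆ I.1).card = (n - T.card).choose (k - T.card) := by
  have hb : (univ.filter fun I : KIdx n k => T ⊆ I.1).card
      = (Finset.powersetCard (k - T.card) ((univ : Finset (Fin n)) \ T)).card := by
    apply Finset.card_bij (fun I _ => I.1 \ T)
    · intro I hI
      rw [Finset.mem_filter] at hI
      rw [Finset.mem_powersetCard]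
      exact ⟨Finset.sdiff_subset_sdiff (Finset.subset_univ _) (le_refl T),
        by rw [Finset.card_sdiff_of_subset hI.2, I.2]⟩
    · intro I hI I' hI' h
      rw [Finset.mem_filter] at hI hI'
      apply Subtype.ext
      rw [← Finset.sdiff_union_of_subset hI.2, ← Finset.sdiff_union_of_subset hI'.2, h]
    · intro S hS
      rw [Finset.mem_powersetCard] at hS
      have hdisj : Disjoint S T := by
        rw [Finset.disjoint_right]
        intro x hxT hxS
        exact (Finset.mem_sdiff.1 (hS.1 hxS)).2 hxT
      have hcard : (S ∪ T).card = k := by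
        rw [Finset.card_union_of_disjoint hdisj, hS.2]
        omega
      refine ⟨⟨S ∪ T, hcard⟩, ?_, ?_⟩
      · rw [Finset.mem_filter]
        exact ⟨Finset.mem_univ _, Finset.subset_union_right⟩
      · show (S ∪ T) \ T = S
        ext x
        rw [Finset.mem_sdiff, Finset.mem_union]
        constructor
        · rintro ⟨h1 | h1, h2⟩
          · exact h1
          · exact absurd h1 h2
        · intro hx
          exact ⟨Or.inl hx, fun hc => (Finset.disjoint_left.1 hdisj) hx hc⟩
  rw [hb, Finset.card_powersetCard, Finset.card_sdiff_of_subset (Finset.subset_univ T),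
    Finset.card_univ, Fintype.card_fin]

lemma Cmap_single {k : ℕ} (hk2 : 2 ≤ k) (hkn : k ≤ n - 2) (hn4 : 4 ≤ n) (a : Fin n) :
    ∃ x : KIdx n k → ℝ, Cmap n k x = Pi.single a 1 := by
  set α : ℕ := (n - 1).choose (k - 1) with hα
  set β : ℕ := (n - 2).choose (k - 2) with hβ
  set γ : ℕ := (n - 2).choose (k - 1) with hγ
  have hpascal : α = β + γ := by
    rw [hα, hβ, hγ, show n - 1 = (n - 2) + 1 by omega, show k - 1 = (k - 2) + 1 by omega]
    rw [Nat.choose_succ_succ]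
  have hγpos : 0 < γ := Nat.choose_pos (by omega)
  have hαpos : 0 < α := Nat.choose_pos (by omega)
  -- counting
  have hcount1 : ∀ b : Fin n, ∑ I : KIdx n k, (if b ∈ I.1 then (1:ℝ) else 0) = α := by
    intro b
    rw [Finset.sum_boole]
    have : (univ.filter fun I : KIdx n k => b ∈ I.1)
        = (univ.filter fun I : KIdx n k => {b} ⊆ I.1) := by
      apply Finset.filter_congr
      intro I _
      rw [Finset.singleton_subset_iff]
    rw [this, card_kidx_supset (by omega : k ≤ n)
      (by rw [Finset.card_singleton]; omega : ({b} : Finset (Fin n)).card ≤ k)]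
    norm_num [hα]
  have hcount2 : ∀ b : Fin n, a ≠ b →
      ∑ I : KIdx n k, (if b ∈ I.1 then (if a ∈ I.1 then (1:ℝ) else 0) else 0) = β := by
    intro b hab
    have e : ∀ I : KIdx n k, (if b ∈ I.1 then (if a ∈ I.1 then (1:ℝ) else 0) else 0)
        = if ({a, b} : Finset (Fin n)) ⊆ I.1 then 1 else 0 := by
      intro I
      simp only [Finset.insert_subset_iff, Finset.singleton_subset_iff]
      split_ifs <;> tauto
    have hT : ({a, b} : Finset (Fin n)).card = 2 := by
      rw [Finset.card_insert_of_notMem (by simpa using hab), Finset.card_singleton]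
    rw [Finset.sum_congr rfl (fun I _ => e I), Finset.sum_boole,
      card_kidx_supset (by omega : k ≤ n) (by rw [hT]; omega), hT]
  -- the explicit preimage
  set va : KIdx n k → ℝ := fun I => if a ∈ I.1 then 1 else 0 with hva
  set uu : KIdx n k → ℝ := fun _ => 1 with huu
  refine ⟨(1 / (γ:ℝ)) • va + (-(β:ℝ) / ((α:ℝ) * γ)) • uu, ?_⟩
  funext b
  have hCva : Cmap n k va b = if a = b then (α:ℝ) else β := by
    show (∑ I : KIdx n k, if b ∈ I.1 then va I else 0) = _
    by_cases hab : a = b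
    · subst hab
      rw [if_pos rfl, hva]
      rw [← hcount1 a]
      apply Finset.sum_congr rfl
      intro I _
      split_ifs <;> simp_all
    · rw [if_neg hab, ← hcount2 b hab]
  have hCu : Cmap n k uu b = (α:ℝ) := by
    show (∑ I : KIdx n k, if b ∈ I.1 then uu I else 0) = _
    rw [← hcount1 b]
  have hexp : Cmap n k ((1 / (γ:ℝ)) • va + (-(β:ℝ) / ((α:ℝ) * γ)) • uu) b
      = (1 / (γ:ℝ)) * (Cmap n k va b) + (-(β:ℝ) / ((α:ℝ) * γ)) * (Cmap n k uu b) := by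
    rw [map_add, map_smul, map_smul]
    rfl
  rw [hexp, hCva, hCu]
  have hγr : (γ:ℝ) ≠ 0 := Nat.cast_ne_zero.2 (by omega)
  have hαr : (α:ℝ) ≠ 0 := Nat.cast_ne_zero.2 (by omega)
  have hαβγ : (α:ℝ) = (β:ℝ) + γ := by exact_mod_cast congrArg (fun x : ℕ => (x:ℝ)) hpascal
  by_cases hab : a = b
  · subst hab
    rw [if_pos rfl, Pi.single_eq_same, hαβγ]
    have h1 : (β:ℝ) + γ ≠ 0 := by rw [← hαβγ]; exact hαr
    field_simp
    ring
  · rw [if_neg hab, Pi.single_eq_of_ne (Ne.symm hab)]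
    field_simp
    ring

lemma Cmap_surj {k : ℕ} (hk2 : 2 ≤ k) (hkn : k ≤ n - 2) (hn4 : 4 ≤ n) :
    Function.Surjective (Cmap n k) := by
  rw [← LinearMap.range_eq_top, ← top_le_iff, ← (Pi.basisFun ℝ (Fin n)).span_eq,
    Submodule.span_le]
  rintro y ⟨a, rfl⟩
  obtain ⟨x, hx⟩ := Cmap_single hk2 hkn hn4 a
  refine ⟨x, ?_⟩
  rw [hx]
  simp [Pi.basisFun_apply]

lemma card_kidx (n k : ℕ) : Fintype.card (KIdx n k) = n.choose k := by
  rw [Fintype.card_subtype]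
  have : (univ.filter fun J : Finset (Fin n) => J.card = k)
      = Finset.powersetCard k (univ : Finset (Fin n)) := by
    ext J
    rw [Finset.mem_filter, Finset.mem_powersetCard]
    constructor
    · intro h; exact ⟨Finset.subset_univ _, h.2⟩
    · intro h; exact ⟨Finset.mem_univ _, h.2⟩
  rw [this, Finset.card_powersetCard, Finset.card_univ, Fintype.card_fin]

lemma finrank_Kspace {k : ℕ} (hk2 : 2 ≤ k) (hkn : k ≤ n - 2) (hn4 : 4 ≤ n) :
    Module.finrank ℝ (Kspace n k) = n.choose k - n := by
  have h1 := LinearMap.finrank_range_add_finrank_ker (Cmap n k)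
  rw [LinearMap.range_eq_top.2 (Cmap_surj hk2 hkn hn4), finrank_top,
    Module.finrank_fintype_fun_eq_card, Fintype.card_fin,
    Module.finrank_fintype_fun_eq_card, card_kidx] at h1
  rw [Kspace_eq_ker]
  omega


lemma Ji_inj {k : ℕ} [NeZero n] (hk2 : 2 ≤ k) (hkn : k ≤ n - 2) (hn4 : 4 ≤ n) :
    Function.Injective (fun i : Fin n => univ.filter fun y : Fin n => (y - i).val < k) := by
  obtain ⟨m, rfl⟩ : ∃ m, n = m + 1 := ⟨n - 1, by omega⟩
  intro i i' h
  simp only at h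
  have h1 : i ∈ (univ.filter fun y : Fin (m+1) => (y - i').val < k) := by
    rw [← h, mem_Ji, sub_self]
    show (0 : Fin (m+1)).val < k
    rw [Fin.val_zero]
    omega
  have h2 : i - 1 ∉ (univ.filter fun y : Fin (m+1) => (y - i').val < k) := by
    rw [← h, mem_Ji]
    have he : i - 1 - i = 0 - 1 := by ring
    rw [he]
    have hv : ((0 - 1 : Fin (m+1))).val = m := by
      rw [show (0 - 1 : Fin (m+1)) = (0 : Fin (m+1)) - 1 from rfl, Fin.coe_sub_one, if_pos rfl]
    rw [hv]
    omega
  rw [mem_Ji] at h1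
  rw [mem_Ji] at h2
  by_contra hne
  have hd : i - i' ≠ 0 := sub_ne_zero_of_ne hne
  have he2 : i - 1 - i' = (i - i') - 1 := by ring
  rw [he2, Fin.coe_sub_one, if_neg hd] at h2
  omega

lemma card_nonfrozen {k : ℕ} [NeZero n] (hk2 : 2 ≤ k) (hkn : k ≤ n - 2) (hn4 : 4 ≤ n) :
    Fintype.card {J : Finset (Fin n) // J.card = k ∧ ¬ IsFrozenSub n k J}
      = n.choose k - n := by
  rw [Fintype.card_subtype]
  set P := univ.filter fun J : Finset (Fin n) => J.card = k with hPdef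
  have hP : P.card = n.choose k := by
    rw [hPdef]
    have : (univ.filter fun J : Finset (Fin n) => J.card = k)
        = Finset.powersetCard k (univ : Finset (Fin n)) := by
      ext J
      rw [Finset.mem_filter, Finset.mem_powersetCard]
      exact ⟨fun h => ⟨Finset.subset_univ _, h.2⟩, fun h => ⟨Finset.mem_univ _, h.2⟩⟩
    rw [this, Finset.card_powersetCard, Finset.card_univ, Fintype.card_fin]
  have key := Finset.card_filter_add_card_filter_not
    (s := P) (p := fun J => IsFrozenSub n k J)
  have hPF : P.filter (fun J => IsFrozenSub n k J)
      = univ.image (fun i : Fin n => univ.filter fun y : Fin n => (y - i).val < k) := by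
    ext J
    simp only [Finset.mem_filter, Finset.mem_image, Finset.mem_univ, true_and, hPdef]
    constructor
    · rintro ⟨hc, i, hi⟩
      exact ⟨i, hi.symm⟩
    · rintro ⟨i, rfl⟩
      exact ⟨Ji_card (by omega) i, ⟨i, rfl⟩⟩
  have hPFcard : (P.filter (fun J => IsFrozenSub n k J)).card = n := by
    rw [hPF, Finset.card_image_of_injective _ (Ji_inj hk2 hkn hn4), Finset.card_univ,
      Fintype.card_fin]
  have htarget : (univ.filter fun J : Finset (Fin n) => J.card = k ∧ ¬ IsFrozenSub n k J)
      = P.filter (fun J => ¬ IsFrozenSub n k J) := by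
    rw [hPdef, Finset.filter_filter]
  rw [htarget]
  omega

end Stmt7

theorem stmt7 {n k : ℕ} (hk : 2 ≤ k) (hkn : k ≤ n - 2) :
    (∃ e : Kspace n k ≃ₗ[ℝ]
        ({J : Finset (Fin n) // J.card = k ∧ ¬ IsFrozenSub n k J} → ℝ),
      ∀ (s : Kspace n k) (J : {J : Finset (Fin n) // J.card = k ∧ ¬ IsFrozenSub n k J}),
        e s J = eta n k J.1 s.1) ∧
    Module.finrank ℝ (Kspace n k) = n.choose k - n := by
  have hn4 : 4 ≤ n := by omega
  haveI : NeZero n := ⟨by omega⟩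
  have hfr : Module.finrank ℝ (Kspace n k) = n.choose k - n :=
    Stmt7.finrank_Kspace hk hkn hn4
  refine ⟨?_, hfr⟩
  let Φ0 : (KIdx n k → ℝ) →ₗ[ℝ]
      ({J : Finset (Fin n) // J.card = k ∧ ¬ IsFrozenSub n k J} → ℝ) :=
    { toFun := fun s J => eta n k J.1 s
      map_add' := fun x y => by
        funext J
        show eta n k J.1 (x + y) = eta n k J.1 x + eta n k J.1 y
        unfold eta
        have e : ∀ I : KIdx n k, (x + y) I * rho J.1 (ind I.1)
            = x I * rho J.1 (ind I.1) + y I * rho J.1 (ind I.1) := by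
          intro I; rw [Pi.add_apply]; ring
        rw [Finset.sum_congr rfl (fun I _ => e I), Finset.sum_add_distrib]
        ring
      map_smul' := fun c x => by
        funext J
        show eta n k J.1 (c • x) = c * eta n k J.1 x
        unfold eta
        have e : ∀ I : KIdx n k, (c • x) I * rho J.1 (ind I.1)
            = c * (x I * rho J.1 (ind I.1)) := by
          intro I; rw [Pi.smul_apply, smul_eq_mul]; ring
        rw [Finset.sum_congr rfl (fun I _ => e I), ← Finset.mul_sum]
        ring }
  let Φ := Φ0.comp (Kspace n k).subtype
  have hker : ∀ s : Kspace n k, Φ s = 0 → s = 0 := by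
    intro s hs0
    apply Subtype.ext
    apply Stmt7.main_inj hk hkn s.2
    intro J hJf
    have h1 := congrFun hs0 (⟨J.1, ⟨J.2, hJf⟩⟩ :
      {J : Finset (Fin n) // J.card = k ∧ ¬ IsFrozenSub n k J})
    have h2 : eta n k J.1 s.1 = 0 := h1
    rw [Stmt7.eta_formula (by omega : k ≠ 0) s.2 J.2] at h2
    exact h2
  have hinj : Function.Injective Φ := by
    intro a b hab
    have h1 : Φ (a - b) = 0 := by rw [map_sub, hab, sub_self]
    have h2 := hker _ h1
    rwa [sub_eq_zero] at h2
  have hdim : Module.finrank ℝ (Kspace n k) = Module.finrank ℝ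
      ({J : Finset (Fin n) // J.card = k ∧ ¬ IsFrozenSub n k J} → ℝ) := by
    rw [Module.finrank_fintype_fun_eq_card, Stmt7.card_nonfrozen hk hkn hn4, hfr]
  have hsurj := (LinearMap.injective_iff_surjective_of_finrank_eq_finrank hdim).1 hinj
  exact ⟨LinearEquiv.ofBijective Φ ⟨hinj, hsurj⟩, fun s J => rfl⟩
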